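/- arXiv:2301.07229 — 2 statements merged into one kernel-verified Lean document; each statement's English description precedes it below -/
import Mathlib

section
/- Let ρ be a probability measure on ℝ × ℝ that is absolutely continuous with respect to two-dimensional Lebesgue measure, with marginal densities f₁ (first coordinate) and f₂ (second coordinate). Define π₁(x) = condCDF(ρ) x x (the conditional CDF of the second coordinate given the first equals x, evaluated at x) and π₂(x) = condCDF(ρ') x x where ρ' is the pushforward of ρ under the coordinate swap. Then the pushforward of ρ under the map (u, v) ↦ max{u, v} is absolutely continuous with density x ↦ f₁(x)·π₁(x) + f₂(x)·π₂(x) with respect to Lebesgue measure on ℝ. -/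
open MeasureTheory ProbabilityTheory Real Set

/-- The kernel `a ↦ (condCDF ρ a).measure`. -/
noncomputable def condCDFKernel (ρ : Measure (ℝ × ℝ)) : Kernel ℝ ℝ :=
  ⟨fun a => (condCDF ρ a).measure, measurable_measure_condCDF ρ⟩

instance (ρ : Measure (ℝ × ℝ)) : IsMarkovKernel (condCDFKernel ρ) :=
  ⟨fun a => inferInstanceAs (IsProbabilityMeasure (condCDF ρ a).measure)⟩

lemma condCDFKernel_Iic (ρ : Measure (ℝ × ℝ)) (a x : ℝ) :
    condCDFKernel ρ a (Iic x) = ENNReal.ofReal (condCDF ρ a x) :=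
  measure_condCDF_Iic ρ a x

lemma compProd_condCDFKernel (ρ : Measure (ℝ × ℝ)) [IsFiniteMeasure ρ] :
    ρ.fst ⊗ₘ condCDFKernel ρ = ρ := by
  refine ext_of_generate_finite
    (image2 (· ×ˢ ·) {s : Set ℝ | MeasurableSet s} (range Iic)) ?_ ?_ ?_ ?_
  · refine (generateFrom_eq_prod MeasurableSpace.generateFrom_measurableSet
      ((borel_eq_generateFrom_Iic ℝ).symm.trans BorelSpace.measurable_eq.symm)
      isCountablySpanning_measurableSet ?_).symm
    exact ⟨fun n : ℕ => Iic (n : ℝ), fun n => mem_range_self _,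
      eq_univ_of_forall fun x => mem_iUnion.2 ⟨⌈x⌉₊, Nat.le_ceil x⟩⟩
  · exact MeasurableSpace.isPiSystem_measurableSet.prod isPiSystem_Iic
  · rintro _ ⟨s, hs, _, ⟨x, rfl⟩, rfl⟩
    simp only [mem_setOf_eq] at hs
    rw [Measure.compProd_apply_prod hs measurableSet_Iic]
    simp_rw [condCDFKernel_Iic]
    exact setLIntegral_condCDF ρ x hs
  · rw [Measure.compProd_apply_univ, Measure.fst_univ]

lemma lintegral_condCDF_diag (ρ : Measure (ℝ × ℝ)) [IsFiniteMeasure ρ] (t : ℝ) :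
    ∫⁻ a in Iic t, ENNReal.ofReal (condCDF ρ a a) ∂ρ.fst
      = ρ {p : ℝ × ℝ | p.1 ≤ t ∧ p.2 ≤ p.1} := by
  have hE : MeasurableSet {p : ℝ × ℝ | p.1 ≤ t ∧ p.2 ≤ p.1} :=
    (measurable_fst measurableSet_Iic).inter (measurableSet_le measurable_snd measurable_fst)
  conv_rhs => rw [← compProd_condCDFKernel ρ]
  rw [Measure.compProd_apply hE, ← lintegral_indicator measurableSet_Iic]
  refine lintegral_congr fun a => ?_
  by_cases ha : a ≤ t
  · have h1 : Prod.mk a ⁻¹' {p : ℝ × ℝ | p.1 ≤ t ∧ p.2 ≤ p.1} = Iic a := by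
      ext x; simp [ha]
    rw [h1, condCDFKernel_Iic, indicator_of_mem (mem_Iic.2 ha)]
  · have h1 : Prod.mk a ⁻¹' {p : ℝ × ℝ | p.1 ≤ t ∧ p.2 ≤ p.1} = ∅ := by
      ext x; simp [ha]
    rw [h1, indicator_of_notMem (fun h => ha (mem_Iic.1 h))]
    simp

lemma measurable_ofReal_condCDF_diag (ρ : Measure (ℝ × ℝ)) :
    Measurable fun x => ENNReal.ofReal (condCDF ρ x x) := by
  have h : (fun x => ENNReal.ofReal (condCDF ρ x x))
      = fun x => condCDFKernel ρ x (Prod.mk x ⁻¹' {p : ℝ × ℝ | p.2 ≤ p.1}) := by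
    ext x
    have : Prod.mk x ⁻¹' {p : ℝ × ℝ | p.2 ≤ p.1} = Iic x := rfl
    rw [this, condCDFKernel_Iic]
  rw [h]
  exact Kernel.measurable_kernel_prodMk_left
    (measurableSet_le measurable_snd measurable_fst)

/-- The pushforward of an absolutely continuous probability measure `ρ` on `ℝ × ℝ` under
`(u, v) ↦ max u v` has Lebesgue density `x ↦ f₁(x) π₁(x) + f₂(x) π₂(x)`, where `f₁, f₂` are
the marginal densities and `π₁(x) = condCDF ρ x x`, `π₂(x) = condCDF ρ' x x` with `ρ'` the
swap pushforward of `ρ`. -/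
theorem max_pushforward_density
    (ρ : Measure (ℝ × ℝ)) [IsProbabilityMeasure ρ]
    (hac : ρ ≪ (volume : Measure (ℝ × ℝ)))
    (f₁ f₂ : ℝ → ℝ)
    (hf₁meas : Measurable f₁) (hf₂meas : Measurable f₂)
    (hf₁nonneg : ∀ x, 0 ≤ f₁ x) (hf₂nonneg : ∀ x, 0 ≤ f₂ x)
    (hf₁ : ρ.map Prod.fst = volume.withDensity fun x => ENNReal.ofReal (f₁ x))
    (hf₂ : ρ.map Prod.snd = volume.withDensity fun x => ENNReal.ofReal (f₂ x)) :
    ρ.map (fun p : ℝ × ℝ => max p.1 p.2)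
      = volume.withDensity fun x => ENNReal.ofReal
          (f₁ x * condCDF ρ x x + f₂ x * condCDF (ρ.map Prod.swap) x x) := by
  set ρ' := ρ.map Prod.swap with hρ'
  haveI : IsProbabilityMeasure ρ' := Measure.isProbabilityMeasure_map measurable_swap.aemeasurable
  have hmax : Measurable fun p : ℝ × ℝ => max p.1 p.2 := measurable_fst.max measurable_snd
  haveI : IsProbabilityMeasure (ρ.map fun p : ℝ × ℝ => max p.1 p.2) :=
    Measure.isProbabilityMeasure_map hmax.aemeasurable
  refine Measure.ext_of_Iic _ _ fun t => ?_
  -- the two half-plane events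
  set E₁ : Set (ℝ × ℝ) := {p | p.1 ≤ t ∧ p.2 ≤ p.1} with hE₁def
  set E₂ : Set (ℝ × ℝ) := {p | p.2 ≤ t ∧ p.1 ≤ p.2} with hE₂def
  have hE₁ : MeasurableSet E₁ :=
    (measurable_fst measurableSet_Iic).inter (measurableSet_le measurable_snd measurable_fst)
  have hE₂ : MeasurableSet E₂ :=
    (measurable_snd measurableSet_Iic).inter (measurableSet_le measurable_fst measurable_snd)
  -- LHS
  have hLHS : (ρ.map fun p : ℝ × ℝ => max p.1 p.2) (Iic t) = ρ E₁ + ρ E₂ := by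
    rw [Measure.map_apply hmax measurableSet_Iic]
    have hunion : (fun p : ℝ × ℝ => max p.1 p.2) ⁻¹' Iic t = E₁ ∪ E₂ := by
      ext p
      simp only [mem_preimage, mem_Iic, max_le_iff, hE₁def, hE₂def, mem_union, mem_setOf_eq]
      constructor
      · rintro ⟨h1, h2⟩
        rcases le_total p.2 p.1 with h | h
        · exact Or.inl ⟨h1, h⟩
        · exact Or.inr ⟨h2, h⟩
      · rintro (⟨h1, h2⟩ | ⟨h1, h2⟩)
        · exact ⟨h1, h2.trans h1⟩
        · exact ⟨h2.trans h1, h1⟩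
    have hdiag : ρ {p : ℝ × ℝ | p.1 = p.2} = 0 := by
      refine hac ?_
      have hD : MeasurableSet {p : ℝ × ℝ | p.1 = p.2} :=
        measurableSet_eq_fun measurable_fst measurable_snd
      rw [Measure.volume_eq_prod, Measure.prod_apply hD]
      have : ∀ x : ℝ, Prod.mk x ⁻¹' {p : ℝ × ℝ | p.1 = p.2} = {x} := by
        intro x; ext y; simp [eq_comm]
      simp [this]
    have hinter : ρ (E₁ ∩ E₂) = 0 := by
      refine measure_mono_null ?_ hdiag
      rintro p ⟨⟨-, h1⟩, -, h2⟩
      exact le_antisymm h2 h1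
    rw [hunion, ← measure_union_add_inter E₁ hE₂, hinter, add_zero]
  -- RHS
  have hπ₁ : Measurable fun x => ENNReal.ofReal (condCDF ρ x x) :=
    measurable_ofReal_condCDF_diag ρ
  have hπ₂ : Measurable fun x => ENNReal.ofReal (condCDF ρ' x x) :=
    measurable_ofReal_condCDF_diag ρ'
  have hsplit : ∀ x, ENNReal.ofReal
      (f₁ x * condCDF ρ x x + f₂ x * condCDF ρ' x x)
      = ENNReal.ofReal (f₁ x) * ENNReal.ofReal (condCDF ρ x x)
        + ENNReal.ofReal (f₂ x) * ENNReal.ofReal (condCDF ρ' x x) := by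
    intro x
    rw [ENNReal.ofReal_add (mul_nonneg (hf₁nonneg x) (condCDF_nonneg ρ x x))
      (mul_nonneg (hf₂nonneg x) (condCDF_nonneg ρ' x x)),
      ENNReal.ofReal_mul (hf₁nonneg x), ENNReal.ofReal_mul (hf₂nonneg x)]
  have h1 : ∫⁻ x in Iic t, ENNReal.ofReal (f₁ x) * ENNReal.ofReal (condCDF ρ x x) ∂volume
      = ρ E₁ := by
    have h := setLIntegral_withDensity_eq_setLIntegral_mul volume hf₁meas.ennreal_ofReal hπ₁
      (s := Iic t) measurableSet_Iic
    simp only [Pi.mul_apply] at h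
    rw [← h, ← hf₁]
    exact lintegral_condCDF_diag ρ t
  have h2 : ∫⁻ x in Iic t, ENNReal.ofReal (f₂ x) * ENNReal.ofReal (condCDF ρ' x x) ∂volume
      = ρ E₂ := by
    have h := setLIntegral_withDensity_eq_setLIntegral_mul volume hf₂meas.ennreal_ofReal hπ₂
      (s := Iic t) measurableSet_Iic
    simp only [Pi.mul_apply] at h
    rw [← h, ← hf₂]
    have hsnd : ρ.map Prod.snd = ρ'.fst := by
      rw [hρ', Measure.fst_map_swap]; rfl
    rw [hsnd, lintegral_condCDF_diag ρ' t, hρ',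
      Measure.map_apply measurable_swap
        (show MeasurableSet {p : ℝ × ℝ | p.1 ≤ t ∧ p.2 ≤ p.1} from
          (measurable_fst measurableSet_Iic).inter
            (measurableSet_le measurable_snd measurable_fst))]
    rfl
  rw [hLHS, withDensity_apply _ measurableSet_Iic]
  calc ρ E₁ + ρ E₂
      = (∫⁻ x in Iic t, ENNReal.ofReal (f₁ x) * ENNReal.ofReal (condCDF ρ x x) ∂volume)
        + ∫⁻ x in Iic t, ENNReal.ofReal (f₂ x) * ENNReal.ofReal (condCDF ρ' x x) ∂volume := by
        rw [h1, h2]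
    _ = ∫⁻ x in Iic t, (ENNReal.ofReal (f₁ x) * ENNReal.ofReal (condCDF ρ x x)
        + ENNReal.ofReal (f₂ x) * ENNReal.ofReal (condCDF ρ' x x)) ∂volume := by
        rw [← lintegral_add_left (show Measurable fun x => ENNReal.ofReal (f₁ x) * ENNReal.ofReal (condCDF ρ x x) from hf₁meas.ennreal_ofReal.mul hπ₁)]
    _ = ∫⁻ x in Iic t, ENNReal.ofReal
        (f₁ x * condCDF ρ x x + f₂ x * condCDF ρ' x x) ∂volume := by
        simp_rw [hsplit]
end

section
/- Let X : Ω → (Fin n → ℝ), n ≥ 2, be a random vector of integrable coordinates X₁,…,Xₙ such that for every pair 1 ≤ i < j ≤ n the joint law ρ_{ij} of (Xᵢ, Xⱼ) on ℝ × ℝ is absolutely continuous with respect to two-dimensional Lebesgue measure with marginal densities f_i, f_j, and E[|Xᵢ − Xⱼ|] < ∞. Let π_{j,i}(x) = condCDF(ρ_{ij}) x x and π_{i,j}(x) = condCDF(ρ'_{ij}) x x, where ρ'_{ij} is the pushforward of ρ_{ij} under the coordinate swap. Then the Gini mean difference satisfies GMDₙ = (1/C(n,2)) Σ_{1≤i<j≤n}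 ∫_ℝ x·[2 f_i(x)·π_{j,i}(x) + 2 f_j(x)·π_{i,j}(x) − f_i(x) − f_j(x)] dx. -/
open MeasureTheory ProbabilityTheory Real
open scoped ENNReal NNReal

section GMDAux
open Set

noncomputable def cdfKernel (ρ : Measure (ℝ × ℝ)) [IsFiniteMeasure ρ] : Kernel ℝ ℝ :=
  ((isCondKernelCDF_condCDF ρ).toKernel _).comap (fun a => ((), a)) measurable_prodMk_left

lemma cdfKernel_apply (ρ : Measure (ℝ × ℝ)) [IsFiniteMeasure ρ] (a : ℝ) :
    cdfKernel ρ a = (isCondKernelCDF_condCDF ρ).toKernel _ ((), a) := by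
  rw [cdfKernel, Kernel.comap_apply]

lemma cdfKernel_Iic (ρ : Measure (ℝ × ℝ)) [IsFiniteMeasure ρ] (a x : ℝ) :
    cdfKernel ρ a (Iic x) = ENNReal.ofReal (condCDF ρ a x) := by
  rw [cdfKernel_apply]
  exact (isCondKernelCDF_condCDF ρ).toKernel_Iic ((), a) x

instance (ρ : Measure (ℝ × ℝ)) [IsFiniteMeasure ρ] : IsMarkovKernel (cdfKernel ρ) :=
  ⟨fun a => by rw [cdfKernel_apply]; infer_instance⟩

lemma compProd_cdfKernel (ρ : Measure (ℝ × ℝ)) [IsFiniteMeasure ρ] :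
    ρ.fst ⊗ₘ cdfKernel ρ = ρ := by
  have h2 : Kernel.prodMkLeft Unit (cdfKernel ρ)
      = (isCondKernelCDF_condCDF ρ).toKernel _ := by
    ext ⟨u, a⟩ s _
    rw [Kernel.prodMkLeft_apply, cdfKernel_apply]
  rw [Measure.compProd, h2, compProd_toKernel (isCondKernelCDF_condCDF ρ)]
  rfl

lemma condKernel_ae_eq (ρ : Measure (ℝ × ℝ)) [IsFiniteMeasure ρ] :
    ∀ᵐ a ∂ρ.fst, ρ.condKernel a = cdfKernel ρ a :=
  (eq_condKernel_of_measure_eq_compProd _ (compProd_cdfKernel ρ).symm).mono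
    fun _ h => h.symm

lemma measurable_condCDF_diag (ρ : Measure (ℝ × ℝ)) [IsFiniteMeasure ρ] :
    Measurable fun a => condCDF ρ a a := by
  have hs : MeasurableSet {p : ℝ × ℝ | p.2 ≤ p.1} :=
    measurableSet_le measurable_snd measurable_fst
  have h : Measurable fun a => cdfKernel ρ a {b | (a, b) ∈ {p : ℝ × ℝ | p.2 ≤ p.1}} :=
    Kernel.measurable_kernel_prodMk_left hs
  have h2 : ∀ a : ℝ, {b | (a, b) ∈ {p : ℝ × ℝ | p.2 ≤ p.1}} = Iic a := fun a => rfl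
  simp_rw [h2, cdfKernel_Iic] at h
  have := h.ennreal_toReal
  simpa [ENNReal.toReal_ofReal (condCDF_nonneg ρ _ _)] using this

lemma volume_diag : (volume : Measure (ℝ × ℝ)) {p | p.1 = p.2} = 0 := by
  have hs : MeasurableSet {p : ℝ × ℝ | p.1 = p.2} :=
    measurableSet_eq_fun measurable_fst measurable_snd
  rw [Measure.volume_eq_prod, Measure.prod_apply hs]
  have : ∀ x : ℝ, Prod.mk x ⁻¹' {p : ℝ × ℝ | p.1 = p.2} = {x} := by
    intro x; ext y; simp [eq_comm]
  simp [this]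

lemma integral_withDensity_ofReal (fi : ℝ → ℝ) (hfi : Measurable fi) (hfi0 : ∀ x, 0 ≤ fi x)
    (g : ℝ → ℝ) :
    ∫ a, g a ∂(volume.withDensity fun x => ENNReal.ofReal (fi x)) = ∫ a, fi a * g a := by
  have h : (fun x => ENNReal.ofReal (fi x)) = fun x => ((fi x).toNNReal : ℝ≥0∞) := rfl
  rw [h, integral_withDensity_eq_integral_smul hfi.real_toNNReal g]
  congr 1; ext a
  simp [NNReal.smul_def, Real.coe_toNNReal _ (hfi0 a)]

lemma integrable_withDensity_ofReal (fi : ℝ → ℝ) (hfi : Measurable fi) (hfi0 : ∀ x, 0 ≤ fi x)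
    (g : ℝ → ℝ) :
    Integrable g (volume.withDensity fun x => ENNReal.ofReal (fi x))
      ↔ Integrable (fun x => fi x * g x) volume := by
  have h : (fun x => ENNReal.ofReal (fi x)) = fun x => ((fi x).toNNReal : ℝ≥0∞) := rfl
  rw [h, integrable_withDensity_iff_integrable_smul hfi.real_toNNReal]
  constructor <;> intro hh <;>
    · refine hh.congr (Filter.Eventually.of_forall fun a => ?_)
      simp [NNReal.smul_def, Real.coe_toNNReal _ (hfi0 a)]

lemma integrable_ite_fst (ρ : Measure (ℝ × ℝ)) [IsFiniteMeasure ρ]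
    (h1 : Integrable (fun p : ℝ × ℝ => p.1) ρ) :
    Integrable (fun p : ℝ × ℝ => if p.2 ≤ p.1 then p.1 else 0) ρ := by
  have hs : MeasurableSet {p : ℝ × ℝ | p.2 ≤ p.1} :=
    measurableSet_le measurable_snd measurable_fst
  refine h1.mono ((measurable_fst.ite hs measurable_const).aestronglyMeasurable)
    (Filter.Eventually.of_forall fun p => ?_)
  by_cases h : p.2 ≤ p.1 <;> simp [h]

lemma integral_ite_fst (ρ : Measure (ℝ × ℝ)) [IsFiniteMeasure ρ]
    (h1 : Integrable (fun p : ℝ × ℝ => p.1) ρ) :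
    ∫ p : ℝ × ℝ, (if p.2 ≤ p.1 then p.1 else 0) ∂ρ
      = ∫ a, a * condCDF ρ a a ∂ρ.fst := by
  rw [← Measure.integral_condKernel (integrable_ite_fst ρ h1)]
  refine integral_congr_ae ?_
  filter_upwards [condKernel_ae_eq ρ] with a ha
  rw [ha]
  have h : (fun b => if b ≤ a then a else 0) = (Iic a).indicator (fun _ => a) := by
    ext b; by_cases h : b ≤ a <;> simp [h]
  simp only [h]
  rw [integral_indicator_const _ measurableSet_Iic, measureReal_def, cdfKernel_Iic,
    ENNReal.toReal_ofReal (condCDF_nonneg ρ a a), smul_eq_mul, mul_comm]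

lemma pair_formula (ρ : Measure (ℝ × ℝ)) [IsProbabilityMeasure ρ]
    (hρ : ρ ≪ (volume : Measure (ℝ × ℝ)))
    (fi fj : ℝ → ℝ) (hfi : Measurable fi) (hfj : Measurable fj)
    (hfi0 : ∀ x, 0 ≤ fi x) (hfj0 : ∀ x, 0 ≤ fj x)
    (hfst : ρ.fst = volume.withDensity fun x => ENNReal.ofReal (fi x))
    (hsnd : ρ.snd = volume.withDensity fun x => ENNReal.ofReal (fj x))
    (h1 : Integrable (fun p : ℝ × ℝ => p.1) ρ)
    (h2 : Integrable (fun p : ℝ × ℝ => p.2) ρ) :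
    ∫ p : ℝ × ℝ, |p.1 - p.2| ∂ρ
      = ∫ x, x * (2 * fi x * condCDF ρ x x
          + 2 * fj x * condCDF (ρ.map Prod.swap) x x - fi x - fj x) := by
  set ρ' : Measure (ℝ × ℝ) := ρ.map Prod.swap with hρ'def
  have hswapmeas : Measurable (Prod.swap : ℝ × ℝ → ℝ × ℝ) := measurable_swap
  haveI : IsProbabilityMeasure ρ' := Measure.isProbabilityMeasure_map hswapmeas.aemeasurable
  -- integrability transfers
  have h1' : Integrable (fun q : ℝ × ℝ => q.1) ρ' := by
    rw [hρ'def, integrable_map_measure measurable_fst.aestronglyMeasurable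
      hswapmeas.aemeasurable]
    exact h2
  -- the two one-sided integrals
  have hu : ∫ p : ℝ × ℝ, (if p.2 ≤ p.1 then p.1 else 0) ∂ρ
      = ∫ a, a * condCDF ρ a a ∂ρ.fst := integral_ite_fst ρ h1
  have hu' : ∫ q : ℝ × ℝ, (if q.2 ≤ q.1 then q.1 else 0) ∂ρ'
      = ∫ a, a * condCDF ρ' a a ∂ρ.snd := by
    rw [integral_ite_fst ρ' h1', hρ'def, Measure.fst_map_swap]
  -- diagonal is null
  have hdiag : ρ {p : ℝ × ℝ | p.1 = p.2} = 0 := hρ volume_diag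
  have hae : ∀ᵐ p : ℝ × ℝ ∂ρ, p.1 ≠ p.2 := by
    rw [ae_iff]
    simpa using hdiag
  -- v in terms of u over ρ'
  have hsle : MeasurableSet {p : ℝ × ℝ | p.2 ≤ p.1} :=
    measurableSet_le measurable_snd measurable_fst
  have hv_int : Integrable (fun p : ℝ × ℝ => if p.2 ≤ p.1 then p.2 else 0) ρ := by
    refine h2.mono ((measurable_snd.ite hsle measurable_const).aestronglyMeasurable)
      (Filter.Eventually.of_forall fun p => ?_)
    by_cases h : p.2 ≤ p.1 <;> simp [h]
  have hswapu : ∫ q : ℝ × ℝ, (if q.2 ≤ q.1 then q.1 else 0) ∂ρ'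
      = ∫ p : ℝ × ℝ, (if p.1 ≤ p.2 then p.2 else 0) ∂ρ := by
    rw [hρ'def, integral_map hswapmeas.aemeasurable
      ((measurable_fst.ite hsle measurable_const).aestronglyMeasurable)]
    rfl
  have hv_eq : ∫ p : ℝ × ℝ, (if p.2 ≤ p.1 then p.2 else 0) ∂ρ
      = (∫ p : ℝ × ℝ, p.2 ∂ρ) - ∫ q : ℝ × ℝ, (if q.2 ≤ q.1 then q.1 else 0) ∂ρ' := by
    rw [hswapu, eq_sub_iff_add_eq, ← integral_add hv_int]
    · refine integral_congr_ae ?_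
      filter_upwards [hae] with p hp
      rcases lt_trichotomy p.1 p.2 with h | h | h
      · simp [not_le.mpr h, le_of_lt h]
      · exact absurd h hp
      · simp [le_of_lt h, not_le.mpr h]
    · refine h2.mono ((measurable_snd.ite
        (measurableSet_le measurable_fst measurable_snd) measurable_const).aestronglyMeasurable)
        (Filter.Eventually.of_forall fun p => ?_)
      by_cases h : p.1 ≤ p.2 <;> simp [h]
  -- marginal conversions
  have hA : ∫ a, a * condCDF ρ a a ∂ρ.fst = ∫ x, fi x * (x * condCDF ρ x x) := by
    rw [hfst, integral_withDensity_ofReal fi hfi hfi0]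
  have hB : ∫ a, a * condCDF ρ' a a ∂ρ.snd = ∫ x, fj x * (x * condCDF ρ' x x) := by
    rw [hsnd, integral_withDensity_ofReal fj hfj hfj0]
  have hfst_map : ρ.fst = ρ.map Prod.fst := rfl
  have hsnd_map : ρ.snd = ρ.map Prod.snd := rfl
  have hE1 : ∫ p : ℝ × ℝ, p.1 ∂ρ = ∫ x, fi x * x := by
    have h := integral_map (μ := ρ) measurable_fst.aemeasurable
      (f := fun a : ℝ => a) aestronglyMeasurable_id
    rw [← hfst_map] at h
    rw [← h, hfst, integral_withDensity_ofReal fi hfi hfi0]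
  have hE2 : ∫ p : ℝ × ℝ, p.2 ∂ρ = ∫ x, fj x * x := by
    have h := integral_map (μ := ρ) measurable_snd.aemeasurable
      (f := fun a : ℝ => a) aestronglyMeasurable_id
    rw [← hsnd_map] at h
    rw [← h, hsnd, integral_withDensity_ofReal fj hfj hfj0]
  -- integrabilities on the volume side
  have hI1 : Integrable (fun x => fi x * x) volume := by
    have h : Integrable (fun a : ℝ => a) ρ.fst := by
      rw [hfst_map]
      exact (integrable_map_measure (g := fun a : ℝ => a) aestronglyMeasurable_id
        measurable_fst.aemeasurable).2 h1
    rwa [hfst, integrable_withDensity_ofReal fi hfi hfi0] at h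
  have hI2 : Integrable (fun x => fj x * x) volume := by
    have h : Integrable (fun a : ℝ => a) ρ.snd := by
      rw [hsnd_map]
      exact (integrable_map_measure (g := fun a : ℝ => a) aestronglyMeasurable_id
        measurable_snd.aemeasurable).2 h2
    rwa [hsnd, integrable_withDensity_ofReal fj hfj hfj0] at h
  have hIpi1 : Integrable (fun x => fi x * (x * condCDF ρ x x)) volume := by
    refine hI1.mono ((hfi.mul (measurable_id.mul
      (measurable_condCDF_diag ρ))).aestronglyMeasurable)
      (Filter.Eventually.of_forall fun x => ?_)
    have h01 := condCDF_nonneg ρ x x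
    have h11 := condCDF_le_one ρ x x
    rw [Real.norm_eq_abs, Real.norm_eq_abs, abs_mul, abs_mul, abs_mul,
      abs_of_nonneg (hfi0 x), abs_of_nonneg h01]
    calc fi x * (|x| * condCDF ρ x x) = fi x * |x| * condCDF ρ x x := by ring
      _ ≤ fi x * |x| := mul_le_of_le_one_right (mul_nonneg (hfi0 x) (abs_nonneg x)) h11
  have hIpi2 : Integrable (fun x => fj x * (x * condCDF ρ' x x)) volume := by
    refine hI2.mono ((hfj.mul (measurable_id.mul
      (measurable_condCDF_diag ρ'))).aestronglyMeasurable)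
      (Filter.Eventually.of_forall fun x => ?_)
    have h01 := condCDF_nonneg ρ' x x
    have h11 := condCDF_le_one ρ' x x
    rw [Real.norm_eq_abs, Real.norm_eq_abs, abs_mul, abs_mul, abs_mul,
      abs_of_nonneg (hfj0 x), abs_of_nonneg h01]
    calc fj x * (|x| * condCDF ρ' x x) = fj x * |x| * condCDF ρ' x x := by ring
      _ ≤ fj x * |x| := mul_le_of_le_one_right (mul_nonneg (hfj0 x) (abs_nonneg x)) h11
  -- decompose the LHS
  have hu_int := integrable_ite_fst ρ h1
  have hLHS : ∫ p : ℝ × ℝ, |p.1 - p.2| ∂ρ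
      = 2 * (∫ p : ℝ × ℝ, (if p.2 ≤ p.1 then p.1 else 0) ∂ρ)
        - 2 * (∫ p : ℝ × ℝ, (if p.2 ≤ p.1 then p.2 else 0) ∂ρ)
        - (∫ p : ℝ × ℝ, p.1 ∂ρ) + ∫ p : ℝ × ℝ, p.2 ∂ρ := by
    have hfun : ∀ p : ℝ × ℝ, |p.1 - p.2|
        = 2 * (if p.2 ≤ p.1 then p.1 else 0) - 2 * (if p.2 ≤ p.1 then p.2 else 0)
          - p.1 + p.2 := by
      intro p
      by_cases h : p.2 ≤ p.1
      · rw [abs_of_nonneg (by linarith)]; simp [h]; ring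
      · rw [abs_of_neg (by push_neg at h; linarith)]; simp [h]; ring
    have ha2 : Integrable (fun p : ℝ × ℝ => 2 * (if p.2 ≤ p.1 then p.1 else 0)
        - 2 * (if p.2 ≤ p.1 then p.2 else 0)) ρ := by
      exact (hu_int.const_mul 2).sub (hv_int.const_mul 2)
    have ha1 : Integrable (fun p : ℝ × ℝ => 2 * (if p.2 ≤ p.1 then p.1 else 0)
        - 2 * (if p.2 ≤ p.1 then p.2 else 0) - p.1) ρ := by
      exact ha2.sub h1
    rw [integral_congr_ae (Filter.Eventually.of_forall hfun),
      integral_add ha1 h2, integral_sub ha2 h1,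
      integral_sub (hu_int.const_mul 2) (hv_int.const_mul 2),
      MeasureTheory.integral_const_mul, MeasureTheory.integral_const_mul]
  -- decompose the RHS
  have hRHS : ∫ x, x * (2 * fi x * condCDF ρ x x
        + 2 * fj x * condCDF ρ' x x - fi x - fj x)
      = 2 * (∫ x, fi x * (x * condCDF ρ x x))
        + 2 * (∫ x, fj x * (x * condCDF ρ' x x))
        - (∫ x, fi x * x) - ∫ x, fj x * x := by
    have hfun : ∀ x : ℝ, x * (2 * fi x * condCDF ρ x x
          + 2 * fj x * condCDF ρ' x x - fi x - fj x)
        = 2 * (fi x * (x * condCDF ρ x x)) + 2 * (fj x * (x * condCDF ρ' x x))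
          - fi x * x - fj x * x := fun x => by ring
    have hb2 : Integrable (fun x : ℝ => 2 * (fi x * (x * condCDF ρ x x))
        + 2 * (fj x * (x * condCDF ρ' x x))) volume := by
      exact (hIpi1.const_mul 2).add (hIpi2.const_mul 2)
    have hb1 : Integrable (fun x : ℝ => 2 * (fi x * (x * condCDF ρ x x))
        + 2 * (fj x * (x * condCDF ρ' x x)) - fi x * x) volume := by
      exact hb2.sub hI1
    rw [integral_congr_ae (Filter.Eventually.of_forall hfun),
      integral_sub hb1 hI2, integral_sub hb2 hI1,
      integral_add (hIpi1.const_mul 2) (hIpi2.const_mul 2),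
      MeasureTheory.integral_const_mul, MeasureTheory.integral_const_mul]
  rw [hLHS, hRHS, hv_eq, hu, hu', hA, hB, hE1, hE2]
  ring

end GMDAux

/-- Closed-form expression for the Gini mean difference of an absolutely continuous random
vector (Theorem 2 of the paper, in the form of equation (8)):
`GMDₙ = (1/C(n,2)) Σ_{i<j} ∫ x (2 fᵢ(x) π_{j,i}(x) + 2 fⱼ(x) π_{i,j}(x) − fᵢ(x) − fⱼ(x)) dx`. -/
theorem gmd_closed_form
    {Ω : Type*} [MeasurableSpace Ω] (P : Measure Ω) [IsProbabilityMeasure P]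
    (n : ℕ) (hn : 2 ≤ n) (X : Fin n → Ω → ℝ)
    (hmeas : ∀ i, Measurable (X i))
    (hint : ∀ i, Integrable (X i) P)
    (hdiff : ∀ i j, Integrable (fun ω => |X i ω - X j ω|) P)
    (hac : ∀ i j, i < j →
      P.map (fun ω => (X i ω, X j ω)) ≪ (volume : Measure (ℝ × ℝ)))
    (f : Fin n → ℝ → ℝ)
    (hfmeas : ∀ i, Measurable (f i)) (hfnonneg : ∀ i x, 0 ≤ f i x)
    (hf : ∀ i, P.map (X i) = volume.withDensity fun x => ENNReal.ofReal (f i x)) :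
    (1 / (n.choose 2 : ℝ)) *
        ∑ i : Fin n, ∑ j : Fin n, (if i < j then ∫ ω, |X i ω - X j ω| ∂P else 0)
      = (1 / (n.choose 2 : ℝ)) *
        ∑ i : Fin n, ∑ j : Fin n,
          (if i < j then
            ∫ x, x * (2 * f i x * condCDF (P.map (fun ω => (X i ω, X j ω))) x x
              + 2 * f j x
                  * condCDF ((P.map (fun ω => (X i ω, X j ω))).map Prod.swap) x x
              - f i x - f j x)
          else 0) := by
  congr 1
  refine Finset.sum_congr rfl fun i _ => Finset.sum_congr rfl fun j _ => ?_
  by_cases hij : i < j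
  · simp only [hij, if_true]
    have hXij : Measurable fun ω => (X i ω, X j ω) := (hmeas i).prodMk (hmeas j)
    set ρ : Measure (ℝ × ℝ) := P.map (fun ω => (X i ω, X j ω)) with hρdef
    haveI : IsProbabilityMeasure ρ := Measure.isProbabilityMeasure_map hXij.aemeasurable
    have hfst : ρ.fst = volume.withDensity fun x => ENNReal.ofReal (f i x) := by
      rw [hρdef, MeasureTheory.Measure.fst_map_prodMk (hmeas j), hf i]
    have hsnd : ρ.snd = volume.withDensity fun x => ENNReal.ofReal (f j x) := by
      rw [hρdef, MeasureTheory.Measure.snd_map_prodMk (hmeas i), hf j]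
    have h1 : Integrable (fun p : ℝ × ℝ => p.1) ρ := by
      rw [hρdef]
      exact (integrable_map_measure measurable_fst.aestronglyMeasurable
        hXij.aemeasurable).2 (hint i)
    have h2 : Integrable (fun p : ℝ × ℝ => p.2) ρ := by
      rw [hρdef]
      exact (integrable_map_measure measurable_snd.aestronglyMeasurable
        hXij.aemeasurable).2 (hint j)
    have hLHS : ∫ ω, |X i ω - X j ω| ∂P = ∫ p : ℝ × ℝ, |p.1 - p.2| ∂ρ := by
      rw [hρdef, integral_map hXij.aemeasurable (f := fun p : ℝ × ℝ => |p.1 - p.2|)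
        ((measurable_fst.sub measurable_snd).abs.aestronglyMeasurable)]
    rw [hLHS, pair_formula ρ (hac i j hij) (f i) (f j) (hfmeas i) (hfmeas j)
      (hfnonneg i) (hfnonneg j) hfst hsnd h1 h2]
  · simp [hij]
end
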